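/- Let c > 0 and r_1 > r_2 > 0 with r_1 ≤ 2c. Then the profile (β_1, β_2) = (0, 0) is a Nash equilibrium of the two-CP asymmetric neutral game: neither CP can obtain strictly positive payoff by unilaterally deviating. -/
import Mathlib

/-- In the two-CP asymmetric neutral game with `r_1 > r_2 > 0`, `c > 0` and `r_1 ≤ 2c`,
the profile `(0, 0)` is a Nash equilibrium. -/
theorem stmt_16 (c r1 r2 : ℝ) (hc : 0 < c) (hr2 : 0 < r2) (hr12 : r2 < r1)
    (h2c : r1 ≤ 2 * c) :
    (∀ b ∈ Set.Icc (0 : ℝ) 1,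
      (1 - b) * r1 * Real.log (max ((b * r1 + 0 * r2) / (2 * c)) 1) ≤
        (1 - (0 : ℝ)) * r1 * Real.log (max (((0 : ℝ) * r1 + 0 * r2) / (2 * c)) 1)) ∧
    (∀ b ∈ Set.Icc (0 : ℝ) 1,
      (1 - b) * r2 * Real.log (max (((0 : ℝ) * r1 + b * r2) / (2 * c)) 1) ≤
        (1 - (0 : ℝ)) * r2 * Real.log (max (((0 : ℝ) * r1 + 0 * r2) / (2 * c)) 1)) := by
  have h2c0 : (0:ℝ) < 2 * c := by linarith
  constructor <;> rintro b ⟨hb0, hb1⟩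
  · have h1 : (b * r1 + 0 * r2) / (2 * c) ≤ 1 := by
      rw [div_le_one h2c0]
      nlinarith
    rw [max_eq_right h1]
    simp
  · have h1 : (0 * r1 + b * r2) / (2 * c) ≤ 1 := by
      rw [div_le_one h2c0]
      nlinarith
    rw [max_eq_right h1]
    simp
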